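/- Let $1 \le p \le q < s$, $1 \le r \le s$, and let $v \in \mathcal{L}(X;Y)$ be a metric injection. If $v \circ T$ is weakly anisotropic $(s,q,r;p)$-summing for $T \in \mathcal{L}(U;X)$, then $T$ is weakly anisotropic $(s,q,r;p)$-summing, with $w^A_{(s,q,r;p)}(T) \le w^A_{(s,q,r;p)}(v\circ T)$ (injectivity of the ideal $\mathcal{W}^A_{(s,q,r;p)}$). -/
import Mathlib


open scoped BigOperators NNReal ENNReal

noncomputable section

/-- `(xs k)` belongs to `ℓ_r(X*)`. -/
def MemLr (r : ℝ) {X : Type*} [NormedAddCommGroup X] [NormedSpace ℝ X]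
    (xs : ℕ → X →L[ℝ] ℝ) : Prop :=
  Summable fun k => ‖xs k‖ ^ r

/-- The `ℓ_r(X*)` norm. -/
noncomputable def lrNorm (r : ℝ) {X : Type*} [NormedAddCommGroup X] [NormedSpace ℝ X]
    (xs : ℕ → X →L[ℝ] ℝ) : ℝ :=
  (∑' k, ‖xs k‖ ^ r) ^ (1 / r)

/-- Weakly `q`-summable sequences. -/
def WeaklySummable (q : ℝ) {X : Type*} [NormedAddCommGroup X] [NormedSpace ℝ X]
    (x : ℕ → X) : Prop :=
  ∀ f : X →L[ℝ] ℝ, Summable fun j => |f (x j)| ^ q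

/-- The weak `ℓ_q` norm. -/
noncomputable def weakNorm (q : ℝ) {X : Type*} [NormedAddCommGroup X] [NormedSpace ℝ X]
    (x : ℕ → X) : ℝ :=
  ⨆ f : {f : X →L[ℝ] ℝ // ‖f‖ ≤ 1}, (∑' j, |f.1 (x j)| ^ q) ^ (1 / q)

/-- Anisotropic `(s,q,r)`-summable sequences. -/
def AnisoSummable (s q r : ℝ) {X : Type*} [NormedAddCommGroup X] [NormedSpace ℝ X]
    (x : ℕ → X) : Prop :=
  ∀ xs : ℕ → X →L[ℝ] ℝ, MemLr r xs →
    (∀ j, Summable fun k => |xs k (x j)| ^ s) ∧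
      Summable fun j => (∑' k, |xs k (x j)| ^ s) ^ (q / s)

/-- The anisotropic `(s,q,r)` norm. -/
noncomputable def anisoNorm (s q r : ℝ) {X : Type*} [NormedAddCommGroup X] [NormedSpace ℝ X]
    (x : ℕ → X) : ℝ :=
  ⨆ xs : {xs : ℕ → X →L[ℝ] ℝ // MemLr r xs ∧ lrNorm r xs ≤ 1},
    (∑' j, (∑' k, |xs.1 k (x j)| ^ s) ^ (q / s)) ^ (1 / q)

/-- `T` is weakly anisotropic `(s,q,r;p)`-summing, with witnessing constant `D`. -/
def WASConst (s q r p : ℝ) {U X : Type*} [NormedAddCommGroup U] [NormedSpace ℝ U]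
    [NormedAddCommGroup X] [NormedSpace ℝ X] (T : U →L[ℝ] X) (D : ℝ) : Prop :=
  0 < D ∧ ∀ (u : ℕ → U) (xs : ℕ → X →L[ℝ] ℝ), WeaklySummable p u → MemLr r xs →
    (∑' j, (∑' k, |xs k (T (u j))| ^ s) ^ (q / s)) ^ (1 / q) ≤
      D * (∑' k, ‖xs k‖ ^ r) ^ (1 / r) * weakNorm p u

/-- The weakly anisotropic `(s,q,r;p)`-summing norm: infimum of admissible constants. -/
noncomputable def wANorm (s q r p : ℝ) {U X : Type*} [NormedAddCommGroup U] [NormedSpace ℝ U]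
    [NormedAddCommGroup X] [NormedSpace ℝ X] (T : U →L[ℝ] X) : ℝ :=
  sInf {D : ℝ | WASConst s q r p T D}

lemma exists_ext_aux {X Y : Type*} [NormedAddCommGroup X] [NormedSpace ℝ X]
    [NormedAddCommGroup Y] [NormedSpace ℝ Y]
    (v : X →L[ℝ] Y) (hv : ∀ x : X, ‖v x‖ = ‖x‖) (φ : X →L[ℝ] ℝ) :
    ∃ ψ : Y →L[ℝ] ℝ, (∀ x, ψ (v x) = φ x) ∧ ‖ψ‖ ≤ ‖φ‖ := by
  have hinj : Function.Injective v := by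
    intro a b hab
    have : ‖a - b‖ = 0 := by rw [← hv]; simp [map_sub, hab]
    exact sub_eq_zero.mp (norm_eq_zero.mp this)
  set K : Submodule ℝ Y := LinearMap.range (v : X →ₗ[ℝ] Y) with hK
  let e : X ≃ₗ[ℝ] K := LinearEquiv.ofInjective (v : X →ₗ[ℝ] Y) hinj
  have hco : ∀ y : K, v (e.symm y) = (y : Y) := by
    intro y
    have h1 : (e (e.symm y) : Y) = (y : Y) := congrArg Subtype.val (e.apply_symm_apply y)
    rwa [LinearEquiv.ofInjective_apply] at h1
  let f : K →ₗ[ℝ] ℝ := (φ : X →ₗ[ℝ] ℝ).comp e.symm.toLinearMap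
  have hbound : ∀ y : K, ‖f y‖ ≤ ‖φ‖ * ‖y‖ := by
    intro y
    have h1 : ‖f y‖ ≤ ‖φ‖ * ‖e.symm y‖ := φ.le_opNorm _
    have h2 : ‖e.symm y‖ = ‖(y : Y)‖ := by rw [← hv, hco]
    rw [h2] at h1
    simpa using h1
  let F : K →L[ℝ] ℝ := f.mkContinuous ‖φ‖ hbound
  obtain ⟨g, hg, hgn⟩ := exists_extension_norm_eq K F
  refine ⟨g, fun x => ?_, ?_⟩
  · have hmem : v x ∈ K := ⟨x, rfl⟩
    have := hg ⟨v x, hmem⟩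
    have hex : e.symm ⟨v x, hmem⟩ = x := by
      apply hinj
      rw [hco]
    simpa [F, f, hex] using this
  · rw [hgn]
    exact f.mkContinuous_norm_le (norm_nonneg φ) hbound

theorem stmt19 {U X Y : Type*} [NormedAddCommGroup U] [NormedSpace ℝ U] [CompleteSpace U]
    [NormedAddCommGroup X] [NormedSpace ℝ X] [CompleteSpace X]
    [NormedAddCommGroup Y] [NormedSpace ℝ Y] [CompleteSpace Y]
    {s q r p : ℝ} (hp : 1 ≤ p) (hpq : p ≤ q) (hqs : q < s) (hr : 1 ≤ r) (hrs : r ≤ s)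
    (v : X →L[ℝ] Y) (hv : ∀ x : X, ‖v x‖ = ‖x‖) (T : U →L[ℝ] X)
    (h : ∃ D : ℝ, WASConst s q r p (v.comp T) D) :
    (∃ D : ℝ, WASConst s q r p T D) ∧
      wANorm s q r p T ≤ wANorm s q r p (v.comp T) := by
  have key : ∀ D : ℝ, WASConst s q r p (v.comp T) D → WASConst s q r p T D := by
    rintro D ⟨hD0, hD⟩
    refine ⟨hD0, fun u xs hu hxs => ?_⟩
    choose ys hys hnorm using fun k => exists_ext_aux v hv (xs k)
    have hle : ∀ k, ‖ys k‖ ^ r ≤ ‖xs k‖ ^ r := fun k =>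
      Real.rpow_le_rpow (norm_nonneg _) (hnorm k) (by linarith)
    have hys' : MemLr r ys :=
      Summable.of_nonneg_of_le (fun k => Real.rpow_nonneg (norm_nonneg _) r) hle hxs
    have heq : ∀ j k, |ys k ((v.comp T) (u j))| = |xs k (T (u j))| := by
      intro j k
      simp [ContinuousLinearMap.comp_apply, hys]
    have hw : 0 ≤ weakNorm p u :=
      Real.iSup_nonneg fun f =>
        Real.rpow_nonneg (tsum_nonneg fun j => Real.rpow_nonneg (abs_nonneg _) _) _
    calc (∑' j, (∑' k, |xs k (T (u j))| ^ s) ^ (q / s)) ^ (1 / q)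
        = (∑' j, (∑' k, |ys k ((v.comp T) (u j))| ^ s) ^ (q / s)) ^ (1 / q) := by
          simp only [heq]
      _ ≤ D * (∑' k, ‖ys k‖ ^ r) ^ (1 / r) * weakNorm p u := hD u ys hu hys'
      _ ≤ D * (∑' k, ‖xs k‖ ^ r) ^ (1 / r) * weakNorm p u := by
          have hts : (∑' k, ‖ys k‖ ^ r) ≤ ∑' k, ‖xs k‖ ^ r := Summable.tsum_le_tsum hle hys' hxs
          have : (∑' k, ‖ys k‖ ^ r) ^ (1 / r) ≤ (∑' k, ‖xs k‖ ^ r) ^ (1 / r) :=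
            Real.rpow_le_rpow
              (tsum_nonneg fun k => Real.rpow_nonneg (norm_nonneg _) _) hts
              (by positivity)
          have hD0' : (0:ℝ) ≤ D := le_of_lt hD0
          exact mul_le_mul_of_nonneg_right
            (mul_le_mul_of_nonneg_left this hD0') hw
  obtain ⟨D, hDc⟩ := h
  refine ⟨⟨D, key D hDc⟩, ?_⟩
  apply csInf_le_csInf
  · exact ⟨0, fun d hd => le_of_lt hd.1⟩
  · exact ⟨D, hDc⟩
  · exact fun d hd => key d hd
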